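/- Let f : T² → T² be a C¹ local diffeomorphism on the 2-torus. Suppose that for every point x ∈ T² there exists n = n(x) ∈ ℕ with |det(Df^{n(x)}(x))| > 1. Then f is area-expanding: there exist ρ > 1 and C > 0 such that |det(Df^n(x))| > Cρ^n for all x ∈ T² and all n ∈ ℕ. -/
import Mathlib


/-- Abstract formulation on the 2-torus `T² = ℝ/ℤ × ℝ/ℤ`: `f` is a continuous
map and `J x = |det Df(x)| > 0` is the (continuous, positive) Jacobian of the
local diffeomorphism `f`, so that `|det(Df^n(x))| = ∏_{i<n} J(f^i x)` by the
chain rule.  If for every `x` there is `n(x)` with `|det(Df^{n(x)}(x))| > 1`,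
then `f` is area-expanding: there are `ρ > 1` and `C > 0` with
`|det(Df^n(x))| > C·ρ^n` for all `x` and `n`. -/
theorem stmt1
    (f : AddCircle (1:ℝ) × AddCircle (1:ℝ) → AddCircle (1:ℝ) × AddCircle (1:ℝ))
    (hf : Continuous f)
    (J : AddCircle (1:ℝ) × AddCircle (1:ℝ) → ℝ)
    (hJ : Continuous J) (hJpos : ∀ x, 0 < J x)
    (hyp : ∀ x, ∃ n : ℕ, 1 < ∏ i ∈ Finset.range n, J (f^[i] x)) :
    ∃ ρ > (1:ℝ), ∃ C > (0:ℝ),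
      ∀ x, ∀ n : ℕ, C * ρ ^ n < ∏ i ∈ Finset.range n, J (f^[i] x) := by
  haveI : Fact ((0:ℝ) < 1) := ⟨one_pos⟩
  set P : ℕ → AddCircle (1:ℝ) × AddCircle (1:ℝ) → ℝ := fun n x => ∏ i ∈ Finset.range n, J (f^[i] x) with hP
  have hPpos : ∀ n x, 0 < P n x := fun n x =>
    Finset.prod_pos (fun i _ => hJpos _)
  have hPcont : ∀ n, Continuous (P n) := by
    intro n
    exact continuous_finset_prod _ (fun i _ => hJ.comp (hf.iterate i))
  -- cocycle property
  have hcocycle : ∀ k n x, P (k + n) x = P k x * P n (f^[k] x) := by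
    intro k n x
    simp only [hP, Finset.prod_range_add]
    congr 1
    apply Finset.prod_congr rfl
    intro i _
    rw [add_comm k i, Function.iterate_add_apply]
  have hcompact : IsCompact (Set.univ : Set (AddCircle (1:ℝ) × AddCircle (1:ℝ))) := isCompact_univ
  -- open cover
  set W : ℕ × ℕ → Set (AddCircle (1:ℝ) × AddCircle (1:ℝ)) := fun p => {x | 1 + 1/(p.2 + 1 : ℝ) < P p.1 x} with hW
  have hWopen : ∀ p, IsOpen (W p) := fun p =>
    isOpen_lt continuous_const (hPcont p.1)
  have hcover : (Set.univ : Set (AddCircle (1:ℝ) × AddCircle (1:ℝ))) ⊆ ⋃ p, W p := by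
    intro x _
    obtain ⟨n, hn⟩ := hyp x
    obtain ⟨m, hm⟩ := exists_nat_one_div_lt (sub_pos.mpr hn)
    refine Set.mem_iUnion.mpr ⟨(n, m), ?_⟩
    simp only [hW, Set.mem_setOf_eq]
    linarith
  obtain ⟨t, ht⟩ := hcompact.elim_finite_subcover W hWopen hcover
  set M : ℕ := t.sup Prod.snd with hM
  set N : ℕ := max 1 (t.sup Prod.fst) with hN
  have hN1 : 1 ≤ N := le_max_left _ _
  have hNpos : (0:ℝ) < N := by exact_mod_cast hN1
  set σ : ℝ := 1 + 1/(M + 1 : ℝ) with hσdef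
  have hσ : 1 < σ := by
    rw [hσdef]
    have : (0:ℝ) < 1/(M+1 : ℝ) := by positivity
    linarith
  have hσpos : (0:ℝ) < σ := lt_trans one_pos hσ
  -- key uniform expansion
  have key : ∀ x, ∃ k, 1 ≤ k ∧ k ≤ N ∧ σ < P k x := by
    intro x
    have hx := ht (Set.mem_univ x)
    obtain ⟨p, hp, hxp⟩ := Set.mem_iUnion₂.mp hx
    have hxp : 1 + 1/(p.2 + 1 : ℝ) < P p.1 x := hxp
    have hle : σ ≤ 1 + 1/(p.2 + 1 : ℝ) := by
      have h2 : (p.2 : ℝ) ≤ M := by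
        exact_mod_cast Finset.le_sup (f := Prod.snd) hp
      have : 1/(M + 1 : ℝ) ≤ 1/(p.2 + 1 : ℝ) := by
        apply one_div_le_one_div_of_le <;> linarith
      linarith
    have hσP : σ < P p.1 x := lt_of_le_of_lt hle hxp
    refine ⟨p.1, ?_, ?_, hσP⟩
    · rcases Nat.eq_zero_or_pos p.1 with h0 | h1
      · exfalso
        rw [h0] at hσP
        simp [hP] at hσP
        linarith
      · exact h1
    · exact le_trans (Finset.le_sup (f := Prod.fst) hp) (le_max_right _ _)
  -- minimum of J
  obtain ⟨x₀, -, hx₀⟩ := hcompact.exists_isMinOn ⟨(0,0), Set.mem_univ _⟩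
    hJ.continuousOn
  rw [isMinOn_iff] at hx₀
  set m : ℝ := min (J x₀) 1 with hm
  have hmpos : 0 < m := lt_min (hJpos x₀) one_pos
  have hm1 : m ≤ 1 := min_le_right _ _
  have hmJ : ∀ y, m ≤ J y := fun y =>
    le_trans (min_le_left _ _) (hx₀ y (Set.mem_univ y))
  -- lower bound P n x ≥ m^n
  have hPm : ∀ n x, m ^ n ≤ P n x := by
    intro n x
    rw [hP]
    calc m ^ n = ∏ _i ∈ Finset.range n, m := by rw [Finset.prod_const, Finset.card_range]
    _ ≤ _ := Finset.prod_le_prod (fun i _ => le_of_lt hmpos) (fun i _ => hmJ _)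
  set ρ : ℝ := σ ^ ((N:ℝ)⁻¹) with hρdef
  have hρ : 1 < ρ := by
    rw [hρdef]
    rw [Real.one_lt_rpow_iff_of_pos hσpos]
    left
    exact ⟨hσ, by positivity⟩
  have hρpos : 0 < ρ := lt_trans one_pos hρ
  have hρn : ∀ n : ℕ, ρ ^ n = σ ^ ((n:ℝ)/N) := by
    intro n
    rw [hρdef, ← Real.rpow_natCast (σ ^ ((N:ℝ)⁻¹)) n, ← Real.rpow_mul (le_of_lt hσpos)]
    congr 1
    field_simp
  have hρk : ∀ k, k ≤ N → ρ ^ k ≤ σ := by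
    intro k hk
    rw [hρn]
    calc σ ^ ((k:ℝ)/N) ≤ σ ^ (1:ℝ) := by
          apply Real.rpow_le_rpow_of_exponent_le (le_of_lt hσ)
          rw [div_le_one hNpos]
          exact_mod_cast hk
    _ = σ := Real.rpow_one σ
  set C : ℝ := m ^ N / σ with hC
  have hCpos : 0 < C := by positivity
  refine ⟨ρ, hρ, C, hCpos, ?_⟩
  intro x n
  induction n using Nat.strong_induction_on generalizing x with
  | _ n ih =>
    rcases lt_or_ge n N with hn | hn
    · -- base case: n < N
      have h1 : C * ρ ^ n < m ^ N := by
        rw [hC, hρn]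
        have heq : m ^ N / σ * σ ^ ((n:ℝ)/N) = m ^ N * σ ^ ((n:ℝ)/N - 1) := by
          rw [Real.rpow_sub hσpos, Real.rpow_one]
          ring
        rw [heq]
        have hlt : σ ^ ((n:ℝ)/N - 1) < 1 := by
          apply Real.rpow_lt_one_of_one_lt_of_neg hσ
          have : (n:ℝ)/N < 1 := by
            rw [div_lt_one hNpos]
            exact_mod_cast hn
          linarith
        calc m ^ N * σ ^ ((n:ℝ)/N - 1) < m ^ N * 1 := by
              apply mul_lt_mul_of_pos_left hlt (by positivity)
        _ = m ^ N := mul_one _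
      have h2 : m ^ N ≤ m ^ n := pow_le_pow_of_le_one (le_of_lt hmpos) hm1 (le_of_lt hn)
      exact lt_of_lt_of_le (lt_of_lt_of_le h1 h2) (hPm n x)
    · -- inductive step
      obtain ⟨k, hk1, hkN, hkσ⟩ := key x
      have hkn : k ≤ n := le_trans hkN hn
      have hcut : n - k < n := Nat.sub_lt (lt_of_lt_of_le (lt_of_lt_of_le one_pos hN1) hn) hk1
      have ihk := ih (n - k) hcut (f^[k] x)
      have hsplit : P n x = P k x * P (n - k) (f^[k] x) := by
        rw [← hcocycle, Nat.add_sub_cancel' hkn]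
      have hρsplit : ρ ^ n = ρ ^ k * ρ ^ (n - k) := by
        rw [← pow_add, Nat.add_sub_cancel' hkn]
      calc C * ρ ^ n = ρ ^ k * (C * ρ ^ (n - k)) := by rw [hρsplit]; ring
      _ ≤ σ * (C * ρ ^ (n - k)) := by
          apply mul_le_mul_of_nonneg_right (hρk k hkN) (by positivity)
      _ < P k x * P (n - k) (f^[k] x) := by
          apply mul_lt_mul'' hkσ ihk (le_of_lt hσpos) (by positivity)
      _ = P n x := hsplit.symm
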